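/- Any s-sparse exponential sum is determined by its values on 2s points in geometric-progression position: if P(x) = Σ_{k∈K} c_k x^k and Q(x) = Σ_{k∈K'} d_k x^k are Laurent polynomials (K, K' ⊂ Z finite) with #K ≤ s, #K' ≤ s, and P(z^n) = Q(z^n) for 2s distinct values z^{n} with n ∈ {0,1,...,2s-1}, where z ∈ C has the property that the powers z^k, k ∈ K ∪ K', are pairwise distinct, then P = Q (same supports and coefficients). -/

import Mathlib

open Complex

/-- An `s`-sparse Laurent polynomial is determined by its values at `2s` points in
geometric progression `z^0, z^1, …, z^{2s-1}`, provided the powers `z^k` are pairwise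
distinct for `k` ranging over the union of the supports. -/
theorem sparse_wavelet_stmt2 (s : ℕ) (z : ℂ) (K K' : Finset ℤ) (c d : ℤ → ℂ)
    (hcK : ∀ k, c k ≠ 0 → k ∈ K) (hdK' : ∀ k, d k ≠ 0 → k ∈ K')
    (hKs : K.card ≤ s) (hK's : K'.card ≤ s)
    (hz : Set.InjOn (fun k : ℤ => z ^ k) (↑K ∪ ↑K'))
    (hagree : ∀ n ∈ Finset.range (2 * s),
      ∑ k ∈ K, c k * (z ^ (n : ℕ)) ^ k = ∑ k ∈ K', d k * (z ^ (n : ℕ)) ^ k) :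
    c = d := by
  classical
  set T : Finset ℤ := K ∪ K' with hT
  set a : ℤ → ℂ := fun k => c k - d k with ha
  -- the key vanishing sums
  have hsum : ∀ n ∈ Finset.range (2 * s), ∑ k ∈ T, a k * (z ^ k) ^ n = 0 := by
    intro n hn
    have hpow : ∀ k : ℤ, ((z : ℂ) ^ k) ^ n = (z ^ (n : ℕ)) ^ k := by
      intro k
      rw [← zpow_natCast ((z : ℂ) ^ k) n, ← zpow_mul, mul_comm, zpow_mul, zpow_natCast]
    have h1 : ∑ k ∈ T, c k * (z ^ (n : ℕ)) ^ k = ∑ k ∈ K, c k * (z ^ (n : ℕ)) ^ k := by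
      refine (Finset.sum_subset Finset.subset_union_left (fun k _ hk => ?_)).symm
      have : c k = 0 := by by_contra h; exact hk (hcK k h)
      rw [this, zero_mul]
    have h2 : ∑ k ∈ T, d k * (z ^ (n : ℕ)) ^ k = ∑ k ∈ K', d k * (z ^ (n : ℕ)) ^ k := by
      refine (Finset.sum_subset Finset.subset_union_right (fun k _ hk => ?_)).symm
      have : d k = 0 := by by_contra h; exact hk (hdK' k h)
      rw [this, zero_mul]
    calc ∑ k ∈ T, a k * (z ^ k) ^ n
        = ∑ k ∈ T, (c k * (z ^ (n : ℕ)) ^ k - d k * (z ^ (n : ℕ)) ^ k) := by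
          refine Finset.sum_congr rfl fun k _ => ?_
          rw [hpow k, ha]; ring
      _ = (∑ k ∈ T, c k * (z ^ (n : ℕ)) ^ k) - ∑ k ∈ T, d k * (z ^ (n : ℕ)) ^ k :=
          Finset.sum_sub_distrib _ _
      _ = 0 := by rw [h1, h2, hagree n hn, sub_self]
  -- enumerate T
  have hTcard : T.card ≤ 2 * s := by
    calc T.card ≤ K.card + K'.card := Finset.card_union_le _ _
      _ ≤ s + s := add_le_add hKs hK's
      _ = 2 * s := (two_mul s).symm
  set f : Fin T.card → T := ⇑T.equivFin.symm with hf
  set e : Fin T.card → ℂ := fun i => z ^ ((f i : ℤ)) with he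
  have he_inj : Function.Injective e := by
    intro i j hij
    have hmem : ∀ i, ((f i : ℤ)) ∈ (↑K ∪ ↑K' : Set ℤ) := by
      intro i
      have h := (f i).2
      simp only [hT, Finset.mem_union] at h
      simpa [Set.mem_union] using h
    have : ((f i : ℤ)) = ((f j : ℤ)) := hz (hmem i) (hmem j) hij
    exact T.equivFin.symm.injective (Subtype.ext this)
  have hv : (fun i => a ((f i : ℤ))) = 0 := by
    apply Matrix.eq_zero_of_forall_pow_sum_mul_pow_eq_zero he_inj
    intro i
    have hi : (i : ℕ) ∈ Finset.range (2 * s) :=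
      Finset.mem_range.mpr (lt_of_lt_of_le i.2 hTcard)
    have := hsum (i : ℕ) hi
    rw [← this]
    rw [← Finset.sum_attach T (fun k => a k * (z ^ k) ^ (i : ℕ))]
    exact (Equiv.sum_comp T.equivFin.symm
      (fun x : T => a (x : ℤ) * (z ^ (x : ℤ)) ^ (i : ℕ))).symm ▸ rfl
  funext k
  by_cases hk : k ∈ T
  · have : a k = 0 := by
      have := congrFun hv (T.equivFin ⟨k, hk⟩)
      simpa [hf] using this
    have := sub_eq_zero.mp this
    exact this
  · have hc : c k = 0 := by
      by_contra h
      exact hk (Finset.mem_union_left _ (hcK k h))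
    have hd : d k = 0 := by
      by_contra h
      exact hk (Finset.mem_union_right _ (hdK' k h))
    rw [hc, hd]
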